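/- Let m ≥ 1 be an integer. Consider the Φ(3,1) dynamics with initial carrier Z* = (1,0), starting from the configuration Y^0_0 = (m,1) and Y^0_i = (0,0) for i ≥ 1. Then: for every t with 0 ≤ t ≤ m, the configuration at time t is Y^t_0 = (m−t, 1), Y^t_1 = (t, 0), and Y^t_i = (0,0) for i ≥ 2; and at time m+1 it is Y^{m+1}_0 = (0,0), Y^{m+1}_1 = (m,1), and Y^{m+1}_i = (0,0) for i ≥ 2. Moreover at every one of these time steps the carriers satisfy Z_i = (1,0) for all i ≥ 3. In particular, (m,1) is a one-soliton of Φ(3,1) of minimal length one with velocity 1/(m+1). -/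
import Mathlib


/-- The one-vertex step map of `Φ(3,1)`: `S(Z,Y) = (Y′,Z′)` with
`Y′ = (Z₂ + Y₁ − min(Z₁,Y₁), min(Z₁,Y₁))` and `Z′ = (Z₁ + Z₂ − min(Z₁,Y₁), Y₂)`. -/
def S31 (ZY : (ℤ × ℤ) × (ℤ × ℤ)) : (ℤ × ℤ) × (ℤ × ℤ) :=
  ((ZY.1.2 + ZY.2.1 - min ZY.1.1 ZY.2.1, min ZY.1.1 ZY.2.1),
   (ZY.1.1 + ZY.1.2 - min ZY.1.1 ZY.2.1, ZY.2.2))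

/-- The carriers produced while performing one time step of the `Φ(3,1)` dynamics
on a configuration `Y`, starting from the initial carrier `Z* = (1,0)`:
`Z₀ = (1,0)`, `Z_{i+1} = (S(Z_i, Y_i)).2`. -/
def carriers31 (Y : ℕ → ℤ × ℤ) : ℕ → ℤ × ℤ
  | 0 => (1, 0)
  | i + 1 => (S31 (carriers31 Y i, Y i)).2

/-- The time evolution of the `Φ(3,1)` dynamics with initial carrier `(1,0)`:
`config31 Y0 t` is the configuration of states at time `t`. -/
def config31 (Y0 : ℕ → ℤ × ℤ) : ℕ → ℕ → ℤ × ℤ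
  | 0 => Y0
  | t + 1 => fun i => (S31 (carriers31 (config31 Y0 t) i, config31 Y0 t i)).1

lemma carriers_vac (Y : ℕ → ℤ × ℤ) (hY : ∀ j, 2 ≤ j → Y j = (0, 0))
    (h2 : carriers31 Y 2 = (1, 0)) : ∀ i, 2 ≤ i → carriers31 Y i = (1, 0) := by
  intro i hi
  induction i with
  | zero => omega
  | succ n ih =>
    rcases Nat.lt_or_ge n 2 with h | h
    · have : n = 1 := by omega
      subst this; exact h2
    · have := ih (by omega)
      simp [carriers31, S31, this, hY n h]


/-- `(m,1)` is a one-soliton of `Φ(3,1)` of minimal length one with velocity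
`1/(m+1)`: starting from `Y⁰₀ = (m,1)` and vacuum elsewhere, at times `t ≤ m` the
configuration is `(m−t,1)` at site `0` and `(t,0)` at site `1`, at time `m+1` it is
`(m,1)` at site `1`, and at each of these time steps the carriers equal `(1,0)`
from the site `3` on. -/
theorem stmt_19 (m : ℕ) (hm : 1 ≤ m)
    (Y0 : ℕ → ℤ × ℤ)
    (hY0 : Y0 = fun i => if i = 0 then ((m : ℤ), 1) else (0, 0)) :
    (∀ t : ℕ, t ≤ m → ∀ i : ℕ,
      config31 Y0 t i =
        if i = 0 then ((m : ℤ) - (t : ℤ), 1)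
        else if i = 1 then ((t : ℤ), 0) else (0, 0)) ∧
    (∀ i : ℕ, config31 Y0 (m + 1) i = if i = 1 then ((m : ℤ), 1) else (0, 0)) ∧
    (∀ t : ℕ, t ≤ m → ∀ i : ℕ, 3 ≤ i → carriers31 (config31 Y0 t) i = (1, 0)) := by
  have main : ∀ t, t ≤ m → ∀ i, config31 Y0 t i =
      if i = 0 then ((m : ℤ) - (t : ℤ), 1)
      else if i = 1 then ((t : ℤ), 0) else (0, 0) := by
    intro t
    induction t with
    | zero =>
      intro _ i
      subst hY0
      show (if i = 0 then ((m : ℤ), 1) else (0, 0)) = _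
      split_ifs <;> simp
    | succ t ih =>
      intro ht i
      have hle : t ≤ m := by omega
      have hY := ih hle
      have htm : (t : ℤ) < m := by exact_mod_cast (by omega : t < m)
      have hc1 : carriers31 (config31 Y0 t) 1 = (0, 1) := by
        have hmin : min (1 : ℤ) ((m : ℤ) - t) = 1 := by omega
        simp [carriers31, S31, hY 0, hmin]
      have hc2 : carriers31 (config31 Y0 t) 2 = (1, 0) := by
        have hmin : min (0 : ℤ) ((t : ℤ)) = 0 := by omega
        show (S31 (carriers31 (config31 Y0 t) 1, config31 Y0 t 1)).2 = _
        simp [S31, hc1, hY 1, hmin]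
      have hvac : ∀ i, 2 ≤ i → carriers31 (config31 Y0 t) i = (1, 0) :=
        carriers_vac _ (fun j hj => by
          rw [hY j]
          have h0 : j ≠ 0 := by omega
          have h1 : j ≠ 1 := by omega
          simp [h0, h1]) hc2
      show (S31 (carriers31 (config31 Y0 t) i, config31 Y0 t i)).1 = _
      rcases Nat.lt_or_ge i 2 with h | h
      · interval_cases i
        · have hmin : min (1 : ℤ) ((m : ℤ) - t) = 1 := by omega
          simp [S31, hY 0, hmin, carriers31]
          ring
        · have hmin : min (0 : ℤ) ((t : ℤ)) = 0 := by omega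
          simp [S31, hc1, hY 1, hmin]
          ring
      · have h0 : i ≠ 0 := by omega
        have h1 : i ≠ 1 := by omega
        rw [hvac i h, hY i]
        simp [S31, h0, h1]
  refine ⟨main, ?_, ?_⟩
  · intro i
    have hY := main m le_rfl
    have hmz : ((m : ℤ) : ℤ) ≥ 1 := by exact_mod_cast hm
    have hc1 : carriers31 (config31 Y0 m) 1 = (1, 1) := by
      have hmin : min (1 : ℤ) ((m : ℤ) - m) = 0 := by omega
      simp [carriers31, S31, hY 0, hmin]
    have hc2 : carriers31 (config31 Y0 m) 2 = (1, 0) := by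
      have hmin : min (1 : ℤ) ((m : ℤ)) = 1 := by omega
      show (S31 (carriers31 (config31 Y0 m) 1, config31 Y0 m 1)).2 = _
      simp [S31, hc1, hY 1, hmin]
    have hvac : ∀ i, 2 ≤ i → carriers31 (config31 Y0 m) i = (1, 0) :=
      carriers_vac _ (fun j hj => by
        rw [hY j]
        have h0 : j ≠ 0 := by omega
        have h1 : j ≠ 1 := by omega
        simp [h0, h1]) hc2
    show (S31 (carriers31 (config31 Y0 m) i, config31 Y0 m i)).1 = _
    rcases Nat.lt_or_ge i 2 with h | h
    · interval_cases i
      · have hmin : min (1 : ℤ) ((m : ℤ) - m) = 0 := by omega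
        simp [S31, hY 0, hmin, carriers31]
      · have hmin : min (1 : ℤ) ((m : ℤ)) = 1 := by omega
        simp [S31, hc1, hY 1, hmin]
    · have h0 : i ≠ 0 := by omega
      have h1 : i ≠ 1 := by omega
      rw [hvac i h, hY i]
      simp [S31, h0, h1]
  · intro t ht i hi
    have hY := main t ht
    rcases Nat.lt_or_ge t m with hlt | hge
    · have htm : (t : ℤ) < m := by exact_mod_cast hlt
      have hc1 : carriers31 (config31 Y0 t) 1 = (0, 1) := by
        have hmin : min (1 : ℤ) ((m : ℤ) - t) = 1 := by omega
        simp [carriers31, S31, hY 0, hmin]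
      have hc2 : carriers31 (config31 Y0 t) 2 = (1, 0) := by
        have hmin : min (0 : ℤ) ((t : ℤ)) = 0 := by omega
        show (S31 (carriers31 (config31 Y0 t) 1, config31 Y0 t 1)).2 = _
        simp [S31, hc1, hY 1, hmin]
      exact carriers_vac _ (fun j hj => by
        rw [hY j]
        have h0 : j ≠ 0 := by omega
        have h1 : j ≠ 1 := by omega
        simp [h0, h1]) hc2 i (by omega)
    · have heq : t = m := by omega
      have htm : (t : ℤ) = m := by exact_mod_cast heq
      have hmz : (1 : ℤ) ≤ (t : ℤ) := by exact_mod_cast (by omega : 1 ≤ t)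
      have hc1 : carriers31 (config31 Y0 t) 1 = (1, 1) := by
        have hmin : min (1 : ℤ) ((m : ℤ) - t) = 0 := by omega
        simp [carriers31, S31, hY 0, hmin]
      have hc2 : carriers31 (config31 Y0 t) 2 = (1, 0) := by
        have hmin : min (1 : ℤ) ((t : ℤ)) = 1 := by omega
        show (S31 (carriers31 (config31 Y0 t) 1, config31 Y0 t 1)).2 = _
        simp [S31, hc1, hY 1, hmin]
      exact carriers_vac _ (fun j hj => by
        rw [hY j]
        have h0 : j ≠ 0 := by omega
        have h1 : j ≠ 1 := by omega
        simp [h0, h1]) hc2 i (by omega)
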